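/- Let α be a type and R ⊆ FreeGroup α a set of relators. Then every element w of the normal closure of R is reachable from the identity element 1 by a finite sequence of elementary moves; that is, Relation.ReflTransGen step_R 1 w holds for every w ∈ Subgroup.normalClosure R. -/

import Mathlib

/-- The elementary-move relation: `z` is obtained from `w` either by a
conjugation move by a generator (or its inverse), or by appending a relator
or an inverse relator on the right. -/
def StepR {α : Type*} (R : Set (FreeGroup α)) (w z : FreeGroup α) : Prop :=
  (∃ a : α, z = FreeGroup.of a * w * (FreeGroup.of a)⁻¹ ∨
    z = (FreeGroup.of a)⁻¹ * w * FreeGroup.of a) ∨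
  (∃ t : FreeGroup α, (t ∈ R ∨ t⁻¹ ∈ R) ∧ z = w * t)

lemma stepR_symm {α : Type*} (R : Set (FreeGroup α)) :
    Symmetric (StepR R) := by
  rintro w z (⟨a, h | h⟩ | ⟨t, ht, h⟩)
  · exact Or.inl ⟨a, Or.inr (by subst h; group)⟩
  · exact Or.inl ⟨a, Or.inl (by subst h; group)⟩
  · refine Or.inr ⟨t⁻¹, ?_, by subst h; group⟩
    rcases ht with h' | h'
    · exact Or.inr (by simpa using h')
    · exact Or.inl h'

lemma conj_reach {α : Type*} (R : Set (FreeGroup α)) (g : FreeGroup α) :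
    ∀ w : FreeGroup α, Relation.ReflTransGen (StepR R) w (g * w * g⁻¹) := by
  induction g using FreeGroup.induction_on with
  | C1 => intro w; simpa using Relation.ReflTransGen.refl
  | of a => intro w; exact Relation.ReflTransGen.single (Or.inl ⟨a, Or.inl rfl⟩)
  | inv_of a _ =>
      intro w
      refine Relation.ReflTransGen.single (Or.inl ⟨a, Or.inr ?_⟩)
      group
  | mul x y hx hy =>
      intro w
      have h1 := hy w
      have h2 := hx (y * w * y⁻¹)
      have : x * (y * w * y⁻¹) * x⁻¹ = x * y * w * (x * y)⁻¹ := by group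
      rw [this] at h2
      exact h1.trans h2

lemma reach_mul {α : Type*} (R : Set (FreeGroup α)) {y : FreeGroup α}
    (h : Relation.ReflTransGen (StepR R) 1 y) :
    ∀ x : FreeGroup α, Relation.ReflTransGen (StepR R) x (x * y) := by
  induction h with
  | refl => intro x; simpa using Relation.ReflTransGen.refl
  | tail _ hstep ih =>
      rename_i b c _
      intro x
      rcases hstep with ⟨a, h | h⟩ | ⟨t, ht, h⟩
      · -- c = of a * b * (of a)⁻¹
        subst h
        have h1 : Relation.ReflTransGen (StepR R) x ((FreeGroup.of a)⁻¹ * x * FreeGroup.of a) :=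
          Relation.ReflTransGen.single (Or.inl ⟨a, Or.inr rfl⟩)
        have h2 := ih ((FreeGroup.of a)⁻¹ * x * FreeGroup.of a)
        have h3 : Relation.ReflTransGen (StepR R)
            ((FreeGroup.of a)⁻¹ * x * FreeGroup.of a * b)
            (FreeGroup.of a * ((FreeGroup.of a)⁻¹ * x * FreeGroup.of a * b) * (FreeGroup.of a)⁻¹) :=
          Relation.ReflTransGen.single (Or.inl ⟨a, Or.inl rfl⟩)
        have heq : FreeGroup.of a * ((FreeGroup.of a)⁻¹ * x * FreeGroup.of a * b) *
            (FreeGroup.of a)⁻¹ = x * (FreeGroup.of a * b * (FreeGroup.of a)⁻¹) := by group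
        rw [heq] at h3
        exact (h1.trans h2).trans h3
      · -- c = (of a)⁻¹ * b * of a
        subst h
        have h1 : Relation.ReflTransGen (StepR R) x (FreeGroup.of a * x * (FreeGroup.of a)⁻¹) :=
          Relation.ReflTransGen.single (Or.inl ⟨a, Or.inl rfl⟩)
        have h2 := ih (FreeGroup.of a * x * (FreeGroup.of a)⁻¹)
        have h3 : Relation.ReflTransGen (StepR R)
            (FreeGroup.of a * x * (FreeGroup.of a)⁻¹ * b)
            ((FreeGroup.of a)⁻¹ * (FreeGroup.of a * x * (FreeGroup.of a)⁻¹ * b) * FreeGroup.of a) :=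
          Relation.ReflTransGen.single (Or.inl ⟨a, Or.inr rfl⟩)
        have heq : (FreeGroup.of a)⁻¹ * (FreeGroup.of a * x * (FreeGroup.of a)⁻¹ * b) *
            FreeGroup.of a = x * ((FreeGroup.of a)⁻¹ * b * FreeGroup.of a) := by group
        rw [heq] at h3
        exact (h1.trans h2).trans h3
      · -- c = b * t
        subst h
        have h1 := ih x
        have h2 : Relation.ReflTransGen (StepR R) (x * b) (x * b * t) :=
          Relation.ReflTransGen.single (Or.inr ⟨t, ht, rfl⟩)
        rw [← mul_assoc]
        exact h1.trans h2

/-- Every element of the normal closure of the relator set `R` is reachable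
from the identity by a finite sequence of elementary moves. -/
theorem reachable_from_one {α : Type*} (R : Set (FreeGroup α)) :
    ∀ w ∈ Subgroup.normalClosure R, Relation.ReflTransGen (StepR R) 1 w := by
  intro w hw
  refine Subgroup.closure_induction ?_ ?_ ?_ ?_ hw
  · -- conjugates of relators
    rintro x hx
    rcases Group.mem_conjugatesOfSet_iff.mp hx with ⟨r, hr, hconj⟩
    rcases isConj_iff.mp hconj with ⟨g, rfl⟩
    have h1 : Relation.ReflTransGen (StepR R) 1 r := by
      have := Relation.ReflTransGen.single
        (show StepR R 1 (1 * r) from Or.inr ⟨r, Or.inl hr, rfl⟩)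
      simpa using this
    exact h1.trans (conj_reach R g r)
  · exact Relation.ReflTransGen.refl
  · intro x y _ _ hx hy
    exact hx.trans (reach_mul R hy x)
  · intro x _ hx
    have h1 : Relation.ReflTransGen (StepR R) x⁻¹ (x⁻¹ * x) := reach_mul R hx x⁻¹
    rw [inv_mul_cancel] at h1
    exact (haveI : Std.Symm (StepR R) := ⟨fun a b h => stepR_symm R h⟩; Std.Symm.symm _ _ h1)
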